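/- arXiv:0705.0186 — 5 statements merged into one kernel-verified Lean document; each statement's English description precedes it below -/
import Mathlib

section
/- Let C₁ be a ground state at field H₁ and C₂ a ground state at field H₂ with H₁ < H₂ and M(C₁) < M(C₂), and let H* = (E₀(C₂) - E₀(C₁)) / (M(C₂) - M(C₁)) be the crossing field. Assume there is no spin configuration C with E(C, H*) < E(C₁, H*). Then C₁ is a ground state at every field H with H₁ ≤ H ≤ H*, and C₂ is a ground state at every field H with H* ≤ H ≤ H₂. -/
open Finset

section RFIM

variable {V : Type*} [Fintype V] [Nonempty V] [DecidableEq V]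
variable (G : SimpleGraph V) [DecidableRel G.Adj]
variable (J : ℝ) (h : V → ℝ)

/-- A spin configuration: every spin is `-1` or `+1`. -/
def IsSpin (σ : V → ℤ) : Prop := ∀ i, σ i = -1 ∨ σ i = 1

/-- The product of the two spins at the endpoints of an (unordered) edge. -/
noncomputable def pairProd (σ : V → ℤ) : Sym2 V → ℝ :=
  Sym2.lift ⟨fun i j => (σ i : ℝ) * (σ j : ℝ), fun i j => by ring⟩

/-- Energy of configuration `σ` at external field `H`. -/
noncomputable def E (σ : V → ℤ) (H : ℝ) : ℝ :=
  -J * (∑ e ∈ G.edgeFinset, pairProd σ e) - ∑ i, (H + h i) * (σ i : ℝ)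

/-- Magnetization. -/
noncomputable def M (σ : V → ℤ) : ℝ := ∑ i, (σ i : ℝ)

/-- Energy at zero field. -/
noncomputable def E₀ (σ : V → ℤ) : ℝ := E G J h σ 0

/-- `σ` is a ground state at field `H`. -/
def IsGroundState (H : ℝ) (σ : V → ℤ) : Prop :=
  IsSpin σ ∧ ∀ τ : V → ℤ, IsSpin τ → E G J h σ H ≤ E G J h τ H


lemma E_decomp (σ : V → ℤ) (H : ℝ) :
    E G J h σ H = E₀ G J h σ - H * M σ := by
  simp only [E, E₀, M, add_mul, Finset.sum_add_distrib, ← Finset.mul_sum, zero_add, zero_mul]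
  ring

/-- If no configuration beats `C₁` (and `C₂`) at the crossing field, then `C₁`
is the ground state on `[H₁, H*]` and `C₂` is the ground state on `[H*, H₂]`. -/
theorem ground_state_on_intervals
    (hJ : 0 < J) (H₁ H₂ : ℝ) (C₁ C₂ : V → ℤ)
    (h₁ : IsGroundState G J h H₁ C₁) (h₂ : IsGroundState G J h H₂ C₂)
    (hH : H₁ < H₂) (hM : M C₁ < M C₂)
    (hstar : ¬ ∃ C : V → ℤ, IsSpin C ∧
      E G J h C ((E₀ G J h C₂ - E₀ G J h C₁) / (M C₂ - M C₁)) <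
        E G J h C₁ ((E₀ G J h C₂ - E₀ G J h C₁) / (M C₂ - M C₁))) :
    (∀ H : ℝ, H₁ ≤ H → H ≤ (E₀ G J h C₂ - E₀ G J h C₁) / (M C₂ - M C₁) →
        IsGroundState G J h H C₁) ∧
    (∀ H : ℝ, (E₀ G J h C₂ - E₀ G J h C₁) / (M C₂ - M C₁) ≤ H → H ≤ H₂ →
        IsGroundState G J h H C₂) := by
  set Hs := (E₀ G J h C₂ - E₀ G J h C₁) / (M C₂ - M C₁) with hHs
  push_neg at hstar
  have hMne : M C₂ - M C₁ ≠ 0 := by linarith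
  have hcross : E G J h C₁ Hs = E G J h C₂ Hs := by
    rw [E_decomp, E_decomp, hHs]
    field_simp
    ring
  have hgs1 : ∀ τ : V → ℤ, IsSpin τ → E G J h C₁ Hs ≤ E G J h τ Hs := by
    intro τ hτ; exact hstar τ hτ
  have hgs2 : ∀ τ : V → ℤ, IsSpin τ → E G J h C₂ Hs ≤ E G J h τ Hs := by
    intro τ hτ; rw [← hcross]; exact hstar τ hτ
  constructor
  · intro H hHa hHb
    refine ⟨h₁.1, fun τ hτ => ?_⟩
    have e1 := h₁.2 τ hτ
    have e2 := hgs1 τ hτ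
    rw [E_decomp, E_decomp] at e1 e2 ⊢
    rcases le_total (M C₁) (M τ) with hm | hm
    · nlinarith [mul_nonneg (sub_nonneg.2 hHb) (sub_nonneg.2 hm)]
    · nlinarith [mul_nonneg (sub_nonneg.2 hHa) (sub_nonneg.2 hm)]
  · intro H hHa hHb
    refine ⟨h₂.1, fun τ hτ => ?_⟩
    have e1 := h₂.2 τ hτ
    have e2 := hgs2 τ hτ
    rw [E_decomp, E_decomp] at e1 e2 ⊢
    rcases le_total (M C₂) (M τ) with hm | hm
    · nlinarith [mul_nonneg (sub_nonneg.2 hHb) (sub_nonneg.2 hm)]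
    · nlinarith [mul_nonneg (sub_nonneg.2 hHa) (sub_nonneg.2 hm)]


end RFIM
end

section
/- Let σ be a spin configuration and F ⊆ V a set of sites, and let σ^F denote the configuration obtained from σ by flipping all spins in F (σ^F i = -σ i for i ∈ F, σ^F i = σ i otherwise). Then for every field H, E(σ^F, H) - E(σ, H) = (sum over i ∈ F of 2 * σ i * (J * (sum of σ j over all neighbors j of i in G) + h i + H)) - 4 * J * (sum over unordered edges {i,j} of G with both endpoints in F of σ i * σ j). -/
open Finset

section RFIM

variable {V : Type*} [Fintype V] [Nonempty V] [DecidableEq V]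
variable (G : SimpleGraph V) [DecidableRel G.Adj]
variable (J : ℝ) (h : V → ℝ)

lemma sum_neighbor_eq_sum_edge (f : V → V → ℝ) :
    ∑ v, ∑ j ∈ G.neighborFinset v, f v j
      = ∑ e ∈ G.edgeFinset,
          Sym2.lift ⟨fun i j => f i j + f j i, fun _ _ => add_comm _ _⟩ e := by
  have h1 : ∑ v, ∑ j ∈ G.neighborFinset v, f v j = ∑ d : G.Dart, f d.fst d.snd := by
    rw [← Finset.sum_fiberwise_of_maps_to (g := fun d : G.Dart => d.fst)
        (fun d _ => Finset.mem_univ _) (fun d => f d.fst d.snd)]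
    refine Finset.sum_congr rfl fun v _ => ?_
    refine Finset.sum_bij' (fun j hj => (⟨(v, j), by simpa using hj⟩ : G.Dart))
      (fun d _ => d.snd) ?_ ?_ ?_ ?_ ?_
    · intro j hj; simp
    · intro d hd; simp only [Finset.mem_filter] at hd
      simp [SimpleGraph.mem_neighborFinset, ← hd.2, d.adj]
    · intro j hj; rfl
    · intro d hd; simp only [Finset.mem_filter] at hd
      ext <;> simp [← hd.2]
    · intro j hj; rfl
  rw [h1, ← Finset.sum_fiberwise_of_maps_to (g := fun d : G.Dart => d.edge)
      (fun d _ => (SimpleGraph.mem_edgeFinset).2 d.edge_mem) (fun d => f d.fst d.snd)]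
  refine Finset.sum_congr rfl fun e he => ?_
  rw [SimpleGraph.mem_edgeFinset] at he
  induction' e with v w
  let d : G.Dart := ⟨(v, w), he⟩
  have hfib : (Finset.univ.filter fun d' : G.Dart => d'.edge = s(v, w)) = {d, d.symm} := by
    have := d.edge_fiber
    exact this
  rw [hfib, Finset.sum_pair d.symm_ne.symm]
  simp [d]

/-- Energy change under flipping all spins in a set `F`. -/
theorem multi_flip_energy_change
    (σ : V → ℤ) (hσ : IsSpin σ) (F : Finset V) (H : ℝ) :
    E G J h (fun i => if i ∈ F then -(σ i) else σ i) H - E G J h σ H =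
      (∑ i ∈ F, 2 * (σ i : ℝ) *
          (J * (∑ j ∈ G.neighborFinset i, (σ j : ℝ)) + h i + H)) -
        4 * J * (∑ e ∈ G.edgeFinset.filter (fun e => ∀ i ∈ e, i ∈ F),
          pairProd σ e) := by
  classical
  set τ : V → ℤ := fun i => if i ∈ F then -(σ i) else σ i with hτ
  set cF : Sym2 V → ℝ := Sym2.lift ⟨fun i j =>
    (if i ∈ F then (1:ℝ) else 0) + (if j ∈ F then (1:ℝ) else 0),
    fun _ _ => add_comm _ _⟩ with hcF
  set bF : Sym2 V → ℝ := Sym2.lift ⟨fun i j =>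
    (if i ∈ F then (1:ℝ) else 0) * (if j ∈ F then (1:ℝ) else 0),
    fun _ _ => mul_comm _ _⟩ with hbF
  have hper : ∀ e ∈ G.edgeFinset, pairProd τ e
      = pairProd σ e + (-2 * (cF e * pairProd σ e) + 4 * (bF e * pairProd σ e)) := by
    intro e _
    induction' e with v w
    simp only [pairProd, Sym2.lift_mk, hτ, hcF, hbF]
    by_cases hv : v ∈ F <;> by_cases hw : w ∈ F <;> simp [hv, hw] <;> push_cast <;> ring
  have hedge : ∑ e ∈ G.edgeFinset, pairProd τ e
      = ∑ e ∈ G.edgeFinset, pairProd σ e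
        + (-2 * ∑ e ∈ G.edgeFinset, cF e * pairProd σ e
           + 4 * ∑ e ∈ G.edgeFinset, bF e * pairProd σ e) := by
    rw [Finset.sum_congr rfl hper, Finset.sum_add_distrib, Finset.sum_add_distrib,
      ← Finset.mul_sum, ← Finset.mul_sum]
  have hc : ∑ e ∈ G.edgeFinset, cF e * pairProd σ e
      = ∑ i ∈ F, (σ i : ℝ) * ∑ j ∈ G.neighborFinset i, (σ j : ℝ) := by
    have haux := sum_neighbor_eq_sum_edge G
      (fun i j => (if i ∈ F then (1:ℝ) else 0) * ((σ i : ℝ) * (σ j : ℝ)))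
    have h2 : ∑ e ∈ G.edgeFinset, cF e * pairProd σ e
        = ∑ e ∈ G.edgeFinset, Sym2.lift ⟨fun i j =>
            (if i ∈ F then (1:ℝ) else 0) * ((σ i : ℝ) * (σ j : ℝ))
            + (if j ∈ F then (1:ℝ) else 0) * ((σ j : ℝ) * (σ i : ℝ)),
            fun _ _ => add_comm _ _⟩ e := by
      refine Finset.sum_congr rfl fun e _ => ?_
      induction' e with v w
      simp only [pairProd, Sym2.lift_mk, hcF]
      ring
    have h3 : ∀ v, ∑ j ∈ G.neighborFinset v,
        (if v ∈ F then (1:ℝ) else 0) * ((σ v : ℝ) * (σ j : ℝ))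
        = if v ∈ F then (σ v : ℝ) * ∑ j ∈ G.neighborFinset v, (σ j : ℝ) else 0 := by
      intro v
      by_cases hv : v ∈ F <;> simp [hv, Finset.mul_sum]
    rw [h2, ← haux]
    rw [Finset.sum_congr rfl fun v _ => h3 v, Finset.sum_ite_mem, Finset.univ_inter]
  have hb : ∑ e ∈ G.edgeFinset, bF e * pairProd σ e
      = ∑ e ∈ G.edgeFinset.filter (fun e => ∀ i ∈ e, i ∈ F), pairProd σ e := by
    rw [Finset.sum_filter]
    refine Finset.sum_congr rfl fun e _ => ?_
    induction' e with v w
    by_cases hv : v ∈ F <;> by_cases hw : w ∈ F <;>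
      simp [hbF, pairProd, Sym2.mem_iff, hv, hw]
  have hfield : ∑ i, (H + h i) * (τ i : ℝ) - ∑ i, (H + h i) * (σ i : ℝ)
      = ∑ i ∈ F, (-(2 * (σ i : ℝ) * (H + h i))) := by
    rw [← Finset.sum_sub_distrib]
    have h4 : ∀ i ∈ (Finset.univ : Finset V),
        (H + h i) * (τ i : ℝ) - (H + h i) * (σ i : ℝ)
        = if i ∈ F then -(2 * (σ i : ℝ) * (H + h i)) else 0 := by
      intro i _
      by_cases hi : i ∈ F <;> simp [hτ, hi] <;> push_cast <;> ring
    rw [Finset.sum_congr rfl h4, Finset.sum_ite_mem, Finset.univ_inter]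
  have hE : E G J h τ H - E G J h σ H
      = -J * (∑ e ∈ G.edgeFinset, pairProd τ e - ∑ e ∈ G.edgeFinset, pairProd σ e)
        - (∑ i, (H + h i) * (τ i : ℝ) - ∑ i, (H + h i) * (σ i : ℝ)) := by
    simp only [E]; ring
  have hrhs : (∑ i ∈ F, 2 * (σ i : ℝ) *
        (J * (∑ j ∈ G.neighborFinset i, (σ j : ℝ)) + h i + H))
      = 2 * J * (∑ i ∈ F, (σ i : ℝ) * ∑ j ∈ G.neighborFinset i, (σ j : ℝ))
        - ∑ i ∈ F, (-(2 * (σ i : ℝ) * (H + h i))) := by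
    rw [Finset.mul_sum, ← Finset.sum_sub_distrib]
    exact Finset.sum_congr rfl fun i _ => by ring
  rw [hE, hedge, hfield, hc, hb, hrhs]
  ring

end RFIM
end

section
/- For any two spin configurations σ and τ and any field H, E(σ ∨ τ, H) + E(σ ∧ τ, H) ≤ E(σ, H) + E(τ, H), where (σ ∨ τ) i = max(σ i, τ i) and (σ ∧ τ) i = min(σ i, τ i) (submodularity of the random-field Ising energy for ferromagnetic coupling J > 0). -/
open Finset

section RFIM

variable {V : Type*} [Fintype V] [Nonempty V] [DecidableEq V]
variable (G : SimpleGraph V) [DecidableRel G.Adj]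
variable (J : ℝ) (h : V → ℝ)

lemma key_ineq (a b c d : ℤ) (ha : a = -1 ∨ a = 1) (hb : b = -1 ∨ b = 1)
    (hc : c = -1 ∨ c = 1) (hd : d = -1 ∨ d = 1) :
    a * c + b * d ≤ max a b * max c d + min a b * min c d := by
  rcases ha with rfl | rfl <;> rcases hb with rfl | rfl <;>
    rcases hc with rfl | rfl <;> rcases hd with rfl | rfl <;> decide

/-- Submodularity of the RFIM energy for ferromagnetic coupling. -/
theorem energy_submodular
    (hJ : 0 < J) (σ τ : V → ℤ) (hσ : IsSpin σ) (hτ : IsSpin τ) (H : ℝ) :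
    E G J h (fun i => max (σ i) (τ i)) H + E G J h (fun i => min (σ i) (τ i)) H ≤
      E G J h σ H + E G J h τ H := by
  have hedge : ∀ e ∈ G.edgeFinset,
      pairProd σ e + pairProd τ e ≤
        pairProd (fun i => max (σ i) (τ i)) e + pairProd (fun i => min (σ i) (τ i)) e := by
    intro e _
    induction e using Sym2.ind with
    | _ i j =>
      simp only [pairProd, Sym2.lift_mk]
      have := key_ineq (σ i) (τ i) (σ j) (τ j) (hσ i) (hτ i) (hσ j) (hτ j)
      have h2 : ((σ i * σ j + τ i * τ j : ℤ) : ℝ) ≤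
          ((max (σ i) (τ i) * max (σ j) (τ j) + min (σ i) (τ i) * min (σ j) (τ j) : ℤ) : ℝ) := by
        exact_mod_cast this
      push_cast at h2 ⊢
      linarith
  have hsum : (∑ e ∈ G.edgeFinset, pairProd σ e) + (∑ e ∈ G.edgeFinset, pairProd τ e) ≤
      (∑ e ∈ G.edgeFinset, pairProd (fun i => max (σ i) (τ i)) e) +
        (∑ e ∈ G.edgeFinset, pairProd (fun i => min (σ i) (τ i)) e) := by
    rw [← Finset.sum_add_distrib, ← Finset.sum_add_distrib]
    exact Finset.sum_le_sum hedge
  have hlin : ∀ i : V, ((max (σ i) (τ i) : ℤ) : ℝ) + ((min (σ i) (τ i) : ℤ) : ℝ)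
      = (σ i : ℝ) + (τ i : ℝ) := by
    intro i
    have : (max (σ i) (τ i) + min (σ i) (τ i) : ℤ) = σ i + τ i := max_add_min _ _
    exact_mod_cast this
  have hL : (∑ i, (H + h i) * ((max (σ i) (τ i) : ℤ) : ℝ))
      + (∑ i, (H + h i) * ((min (σ i) (τ i) : ℤ) : ℝ))
      = (∑ i, (H + h i) * (σ i : ℝ)) + (∑ i, (H + h i) * (τ i : ℝ)) := by
    rw [← Finset.sum_add_distrib, ← Finset.sum_add_distrib]
    apply Finset.sum_congr rfl
    intro i _
    rw [← mul_add, ← mul_add, hlin i]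
  simp only [E]
  nlinarith [hsum, hL]

end RFIM
end

section
/- No-passing rule for the ground-state evolution of the random-field Ising model (decreasing field): if C₁ is a ground state at field H₁ and C₂ is a ground state at field H₂ with H₂ < H₁, then for every site i, C₁ i = -1 implies C₂ i = -1; down spins stay down as the field is decreased. -/
open Finset

section RFIM

variable {V : Type*} [Fintype V] [Nonempty V] [DecidableEq V]
variable (G : SimpleGraph V) [DecidableRel G.Adj]
variable (J : ℝ) (h : V → ℝ)

lemma spin_min (σ τ : V → ℤ) (hσ : IsSpin σ) (hτ : IsSpin τ) :
    IsSpin (fun i => min (σ i) (τ i)) := by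
  intro i
  rcases hσ i with h1 | h1 <;> rcases hτ i with h2 | h2 <;> simp [h1, h2]

lemma spin_max (σ τ : V → ℤ) (hσ : IsSpin σ) (hτ : IsSpin τ) :
    IsSpin (fun i => max (σ i) (τ i)) := by
  intro i
  rcases hσ i with h1 | h1 <;> rcases hτ i with h2 | h2 <;> simp [h1, h2]

lemma pair_ineq (σ τ : V → ℤ) (hσ : IsSpin σ) (hτ : IsSpin τ) (e : Sym2 V) :
    pairProd σ e + pairProd τ e ≤
      pairProd (fun i => min (σ i) (τ i)) e + pairProd (fun i => max (σ i) (τ i)) e := by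
  induction e using Sym2.ind with
  | _ i j =>
    simp only [pairProd, Sym2.lift_mk]
    rcases hσ i with h1 | h1 <;> rcases hσ j with h2 | h2 <;>
      rcases hτ i with h3 | h3 <;> rcases hτ j with h4 | h4 <;>
      simp [h1, h2, h3, h4] <;> norm_num

/-- No-passing rule (decreasing field): down spins stay down as the external
field is decreased. -/
theorem no_passing_decreasing
    (hJ : 0 < J) (H₁ H₂ : ℝ) (C₁ C₂ : V → ℤ)
    (h₁ : IsGroundState G J h H₁ C₁) (h₂ : IsGroundState G J h H₂ C₂)
    (hH : H₂ < H₁) :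
    ∀ i, C₁ i = -1 → C₂ i = -1 := by
  obtain ⟨hs₁, hg₁⟩ := h₁
  obtain ⟨hs₂, hg₂⟩ := h₂
  set Tmin : V → ℤ := fun i => min (C₁ i) (C₂ i) with hTmin
  set Tmax : V → ℤ := fun i => max (C₁ i) (C₂ i) with hTmax
  have g1 : E G J h C₁ H₁ ≤ E G J h Tmax H₁ := hg₁ _ (spin_max _ _ hs₁ hs₂)
  have g2 : E G J h C₂ H₂ ≤ E G J h Tmin H₂ := hg₂ _ (spin_min _ _ hs₁ hs₂)
  -- pair-product sum inequality
  have hP : ∑ e ∈ G.edgeFinset, pairProd C₁ e + ∑ e ∈ G.edgeFinset, pairProd C₂ e ≤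
      ∑ e ∈ G.edgeFinset, pairProd Tmin e + ∑ e ∈ G.edgeFinset, pairProd Tmax e := by
    rw [← Finset.sum_add_distrib, ← Finset.sum_add_distrib]
    exact Finset.sum_le_sum fun e _ => pair_ineq C₁ C₂ hs₁ hs₂ e
  -- field-term decomposition: ∑ (H + h i) σ i = H * M σ + ∑ h i σ i
  have hF : ∀ (σ : V → ℤ) (H : ℝ),
      ∑ i, (H + h i) * (σ i : ℝ) = H * M σ + ∑ i, h i * (σ i : ℝ) := by
    intro σ H
    simp only [M, Finset.mul_sum, ← Finset.sum_add_distrib]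
    exact Finset.sum_congr rfl fun i _ => by ring
  have hpt_sum : ∀ i, ((Tmin i : ℝ)) + (Tmax i : ℝ) = (C₁ i : ℝ) + (C₂ i : ℝ) := by
    intro i
    have : Tmin i + Tmax i = C₁ i + C₂ i := by
      simp only [hTmin, hTmax]; omega
    exact_mod_cast this
  have hsumM : M Tmin + M Tmax = M C₁ + M C₂ := by
    simp only [M, ← Finset.sum_add_distrib]
    exact Finset.sum_congr rfl fun i _ => hpt_sum i
  have hsumh : (∑ i, h i * (Tmin i : ℝ)) + ∑ i, h i * (Tmax i : ℝ) =
      (∑ i, h i * (C₁ i : ℝ)) + ∑ i, h i * (C₂ i : ℝ) := by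
    simp only [← Finset.sum_add_distrib]
    refine Finset.sum_congr rfl fun i _ => ?_
    rw [← mul_add, ← mul_add, hpt_sum i]
  -- combine ground-state inequalities
  have key : H₁ * M Tmax + H₂ * M Tmin ≤ H₁ * M C₁ + H₂ * M C₂ := by
    have hsum : E G J h C₁ H₁ + E G J h C₂ H₂ ≤ E G J h Tmax H₁ + E G J h Tmin H₂ :=
      add_le_add g1 g2
    simp only [E, hF] at hsum
    have hJP : -J * (∑ e ∈ G.edgeFinset, pairProd Tmin e + ∑ e ∈ G.edgeFinset, pairProd Tmax e)
        ≤ -J * (∑ e ∈ G.edgeFinset, pairProd C₁ e + ∑ e ∈ G.edgeFinset, pairProd C₂ e) := by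
      apply mul_le_mul_of_nonpos_left hP (by linarith)
    nlinarith [hJP, hsum, hsumh]
  -- deduce M Tmax = M C₁
  have hcast_le : ∀ i, (C₁ i : ℝ) ≤ (Tmax i : ℝ) := by
    intro i
    have : C₁ i ≤ Tmax i := by simp only [hTmax]; exact le_max_left _ _
    exact_mod_cast this
  have hMle : M C₁ ≤ M Tmax := Finset.sum_le_sum fun i _ => hcast_le i
  have e : M Tmin = M C₁ + M C₂ - M Tmax := by linarith
  rw [e] at key
  have h1 : (H₁ - H₂) * (M Tmax - M C₁) ≤ 0 := by nlinarith [key]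
  have hDle : M Tmax ≤ M C₁ := by nlinarith [h1, hH, hMle]
  have hD : M Tmax = M C₁ := le_antisymm hDle hMle
  -- pointwise equality
  have hpt : ∀ i, (C₁ i : ℝ) = (Tmax i : ℝ) := by
    have := (Finset.sum_eq_sum_iff_of_le
      (f := fun i => (C₁ i : ℝ)) (g := fun i => (Tmax i : ℝ))
      (fun i _ => hcast_le i)).mp hD.symm
    intro i; exact this i (Finset.mem_univ i)
  intro i hi
  have hZ : C₁ i = Tmax i := by exact_mod_cast hpt i
  simp only [hTmax] at hZ
  rcases hs₂ i with h' | h'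
  · exact h'
  · omega

end RFIM
end

section
/- Single-avalanche property: let C₁ ≠ C₂ be two spin configurations that are both ground states at a field H*, and suppose the ground state is otherwise non-degenerate at H*, i.e., every spin configuration C with C ≠ C₁ and C ≠ C₂ satisfies E(C, H*) > E(C₁, H*). Then the set D = {i ∈ V | C₁ i ≠ C₂ i} of sites on which the two ground states differ induces a connected subgraph of G; in particular, D cannot be partitioned into two nonempty sets A₁ and A₂ with no edge of G between them (two consecutive ground states are connected by a single avalanche). -/
open Finset

section RFIM

variable {V : Type*} [Fintype V] [Nonempty V] [DecidableEq V]
variable (G : SimpleGraph V) [DecidableRel G.Adj]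
variable (J : ℝ) (h : V → ℝ)

/-- Single-avalanche property: two degenerate ground states at a crossing field
(with no other degeneracy) differ on a set of sites inducing a connected
subgraph of `G`. -/
theorem single_avalanche
    (hJ : 0 < J) (Hstar : ℝ) (C₁ C₂ : V → ℤ)
    (h₁ : IsGroundState G J h Hstar C₁) (h₂ : IsGroundState G J h Hstar C₂)
    (hne : C₁ ≠ C₂)
    (hnd : ∀ C : V → ℤ, IsSpin C → C ≠ C₁ → C ≠ C₂ →
      E G J h C₁ Hstar < E G J h C Hstar) :
    (G.induce {i : V | C₁ i ≠ C₂ i}).Connected := by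
  classical
  set D : Set V := {i : V | C₁ i ≠ C₂ i} with hDdef
  obtain ⟨i₀, hi₀⟩ : ∃ i, C₁ i ≠ C₂ i := Function.ne_iff.mp hne
  have hi₀D : i₀ ∈ D := hi₀
  set A : Set V :=
    {j : V | ∃ hj : j ∈ D, (G.induce D).Reachable ⟨i₀, hi₀D⟩ ⟨j, hj⟩} with hAdef
  have hi₀A : i₀ ∈ A := ⟨hi₀D, SimpleGraph.Reachable.refl _⟩
  have hAD : A ⊆ D := fun j hj => hj.1
  have hclose : ∀ i j, i ∈ A → G.Adj i j → j ∈ D → j ∈ A := by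
    rintro i j ⟨hiD, hreach⟩ hadj hjD
    refine ⟨hjD, hreach.trans (SimpleGraph.Adj.reachable ?_)⟩
    exact hadj
  set σ₃ : V → ℤ := fun i => if i ∈ A then C₂ i else C₁ i with hσ₃
  set σ₄ : V → ℤ := fun i => if i ∈ A then C₁ i else C₂ i with hσ₄
  have spin3 : IsSpin σ₃ := by
    intro i; simp only [hσ₃]; split
    · exact h₂.1 i
    · exact h₁.1 i
  have spin4 : IsSpin σ₄ := by
    intro i; simp only [hσ₄]; split
    · exact h₁.1 i
    · exact h₂.1 i
  -- edge sums
  have hedge : (∑ e ∈ G.edgeFinset, pairProd σ₃ e) + (∑ e ∈ G.edgeFinset, pairProd σ₄ e)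
      = (∑ e ∈ G.edgeFinset, pairProd C₁ e) + (∑ e ∈ G.edgeFinset, pairProd C₂ e) := by
    rw [← Finset.sum_add_distrib, ← Finset.sum_add_distrib]
    refine Finset.sum_congr rfl ?_
    intro e he
    induction e using Sym2.ind with
    | _ i j =>
      have hadj : G.Adj i j := by
        rw [SimpleGraph.mem_edgeFinset, SimpleGraph.mem_edgeSet] at he
        exact he
      simp only [pairProd, Sym2.lift_mk]
      by_cases hiA : i ∈ A <;> by_cases hjA : j ∈ A
      · simp only [hσ₃, hσ₄, if_pos hiA, if_pos hjA]; ring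
      · have hjD : j ∉ D := fun hjD => hjA (hclose i j hiA hadj hjD)
        have hj : (C₁ j : ℝ) = (C₂ j : ℝ) := by
          exact_mod_cast not_not.mp hjD
        simp only [hσ₃, hσ₄, if_pos hiA, if_neg hjA]
        rw [hj]; ring
      · have hiD : i ∉ D := fun hiD => hiA (hclose j i hjA hadj.symm hiD)
        have hi : (C₁ i : ℝ) = (C₂ i : ℝ) := by
          exact_mod_cast not_not.mp hiD
        simp only [hσ₃, hσ₄, if_pos hjA, if_neg hiA]
        rw [hi]; ring
      · simp only [hσ₃, hσ₄, if_neg hiA, if_neg hjA]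
  have hvert : (∑ i, (Hstar + h i) * (σ₃ i : ℝ)) + (∑ i, (Hstar + h i) * (σ₄ i : ℝ))
      = (∑ i, (Hstar + h i) * (C₁ i : ℝ)) + (∑ i, (Hstar + h i) * (C₂ i : ℝ)) := by
    rw [← Finset.sum_add_distrib, ← Finset.sum_add_distrib]
    refine Finset.sum_congr rfl ?_
    intro i _
    by_cases hiA : i ∈ A
    · simp only [hσ₃, hσ₄, if_pos hiA]; ring
    · simp only [hσ₃, hσ₄, if_neg hiA]
  have hEsum : E G J h σ₃ Hstar + E G J h σ₄ Hstar
      = E G J h C₁ Hstar + E G J h C₂ Hstar := by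
    simp only [E]
    linear_combination (-J) * hedge - hvert
  have hE12 : E G J h C₂ Hstar = E G J h C₁ Hstar :=
    le_antisymm (h₂.2 C₁ h₁.1) (h₁.2 C₂ h₂.1)
  have h3ge : E G J h C₁ Hstar ≤ E G J h σ₃ Hstar := h₁.2 σ₃ spin3
  have h4ge : E G J h C₁ Hstar ≤ E G J h σ₄ Hstar := h₁.2 σ₄ spin4
  have h3eq : E G J h σ₃ Hstar = E G J h C₁ Hstar := by linarith
  have h31 : σ₃ ≠ C₁ := by
    intro hcon
    have : σ₃ i₀ = C₂ i₀ := if_pos hi₀A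
    rw [hcon] at this
    exact hi₀ this
  have h32 : σ₃ = C₂ := by
    by_contra h32
    have := hnd σ₃ spin3 h31 h32
    linarith
  have hDA : D ⊆ A := by
    intro j hjD
    by_contra hjA
    have : σ₃ j = C₁ j := if_neg hjA
    rw [h32] at this
    exact hjD this.symm
  haveI : Nonempty ↑D := ⟨⟨i₀, hi₀D⟩⟩
  refine ⟨?_⟩
  rintro ⟨u, hu⟩ ⟨v, hv⟩
  obtain ⟨hu', ru⟩ := hDA hu
  obtain ⟨hv', rv⟩ := hDA hv
  exact ru.symm.trans rv

end RFIM
end
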